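/- Let F be a free group of rank 2 and let H = (F × F) ⋊ C₂ be the wreath product F ≀ C₂, where the nontrivial element of the cyclic group C₂ of order 2 acts on F × F by swapping the two coordinates. Then H × ℤ does not have property FGFPa: there exists an automorphism φ of H × ℤ whose fixed subgroup Fix φ is not finitely generated. (Together with the previous statement, this answers the question of Lei, Ma and Zhang in the negative: FGFPa of H together with finite generation of H' does not imply FGFPa of H × ℤ.) -/

import Mathlib

/-- The subgroup of fixed points of an automorphism `φ` of `G`:
`Fix φ = {g ∈ G | φ(g) = g}`. -/
def fixedSubgroup {G : Type*} [Group G] (φ : G ≃* G) : Subgroup G where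
  carrier := {g | φ g = g}
  one_mem' := map_one φ
  mul_mem' := by
    intro a b ha hb
    simp only [Set.mem_setOf_eq, map_mul] at *
    rw [ha, hb]
  inv_mem' := by
    intro a ha
    simp only [Set.mem_setOf_eq, map_inv] at *
    rw [ha]

/-- A group `G` has property FGFPa if the fixed subgroup of every automorphism of `G`
is finitely generated. -/
def FGFPa (G : Type*) [Group G] : Prop :=
  ∀ φ : G ≃* G, Group.FG ↥(fixedSubgroup φ)

/-- The free group of rank 2. -/
abbrev F₂ : Type := FreeGroup (Fin 2)

/-- The cyclic group of order 2, written multiplicatively. -/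
abbrev C₂ : Type := Multiplicative (ZMod 2)

namespace WreathAux

open Multiplicative SemidirectProduct

/-- The shift automorphism of `Multiplicative (ℤ →₀ ℤ)` by `n`. -/
noncomputable def shiftE (n : ℤ) : Multiplicative (ℤ →₀ ℤ) ≃* Multiplicative (ℤ →₀ ℤ) :=
  AddEquiv.toMultiplicative (Finsupp.domCongr (Equiv.addRight n))

lemma shiftE_apply (n : ℤ) (f : ℤ →₀ ℤ) (k : ℤ) :
    ((shiftE n (ofAdd f)).toAdd) k = f (k - n) := by
  simp [shiftE, Finsupp.domCongr_apply, Finsupp.equivMapDomain_apply, sub_eq_add_neg]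

lemma shiftE_single (n a b : ℤ) :
    shiftE n (ofAdd (Finsupp.single a b)) = ofAdd (Finsupp.single (a + n) b) := by
  have h : shiftE n (ofAdd (Finsupp.single a b)) =
      ofAdd (Finsupp.equivMapDomain (Equiv.addRight n) (Finsupp.single a b)) := rfl
  rw [h, Finsupp.equivMapDomain_single]
  rfl

/-- The shift action of `ℤ` on `Multiplicative (ℤ →₀ ℤ)`. -/
noncomputable def shift : Multiplicative ℤ →* MulAut (Multiplicative (ℤ →₀ ℤ)) where
  toFun n := shiftE n.toAdd
  map_one' := by
    ext f : 1
    apply Multiplicative.toAdd.injective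
    ext k
    have h := shiftE_apply (0 : ℤ) f.toAdd k
    simp only [ofAdd_toAdd, sub_zero] at h
    simpa using h
  map_mul' x y := by
    ext f : 1
    apply Multiplicative.toAdd.injective
    ext k
    rw [MulAut.mul_apply]
    have h1 := shiftE_apply (x*y).toAdd f.toAdd k
    have h2 := shiftE_apply y.toAdd f.toAdd (k - x.toAdd)
    have h3 := shiftE_apply x.toAdd (shiftE y.toAdd f).toAdd k
    simp only [ofAdd_toAdd] at *
    rw [h1, h3, h2]
    congr 1
    simp only [toAdd_mul]
    ring

/-- The wreath-like group `ℤ ≀ ℤ` (lamplighter over ℤ with ℤ lamps). -/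
abbrev W := Multiplicative (ℤ →₀ ℤ) ⋊[shift] Multiplicative ℤ

/-- Exponent sum of the first generator. -/
def ea : F₂ →* Multiplicative ℤ :=
  FreeGroup.lift (fun i => if i = 0 then ofAdd (1 : ℤ) else 1)

/-- The Magnus-type embedding of `F₂` into `W`. -/
noncomputable def θ : F₂ →* W :=
  FreeGroup.lift (fun i => if i = 0 then inr (ofAdd (1 : ℤ))
    else inl (ofAdd (Finsupp.single (0 : ℤ) (1 : ℤ))))

lemma rightHom_θ (f : F₂) : rightHom (θ f) = ea f := by
  have h : (rightHom.comp θ) = ea := by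
    apply FreeGroup.ext_hom
    intro a
    fin_cases a <;> simp [θ, ea]
  exact DFunLike.congr_fun h f

lemma theta_conj (n : ℤ) :
    θ (FreeGroup.of (0 : Fin 2) ^ n * FreeGroup.of (1 : Fin 2) *
        FreeGroup.of (0 : Fin 2) ^ (-n)) =
      inl (ofAdd (Finsupp.single n (1 : ℤ))) := by
  have h0 : θ (FreeGroup.of (0 : Fin 2)) = inr (ofAdd (1 : ℤ)) := by simp [θ]
  have h1 : θ (FreeGroup.of (1 : Fin 2)) = inl (ofAdd (Finsupp.single (0:ℤ) (1:ℤ))) := by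
    simp [θ]
  have base : (ofAdd (1:ℤ)) ^ n = ofAdd n := by rw [← ofAdd_zsmul]; simp
  have hz : θ (FreeGroup.of (0 : Fin 2) ^ n) = inr (ofAdd n) := by
    rw [map_zpow, h0, ← map_zpow, base]
  have hz' : θ (FreeGroup.of (0 : Fin 2) ^ (-n)) = inr ((ofAdd n)⁻¹) := by
    rw [map_zpow, h0, zpow_neg, ← map_zpow, base, ← map_inv]
  rw [map_mul, map_mul, hz, hz', h1, ← inl_aut]
  congr 1
  show shift (ofAdd n) _ = _
  have h : shift (ofAdd n) = shiftE n := rfl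
  rw [h, shiftE_single, zero_add]

lemma A_not_fg : ¬ AddGroup.FG (ℤ →₀ ℤ) := by
  intro h
  obtain ⟨S, hSc, hSf⟩ := AddGroup.fg_iff.mp h
  set T : Finset ℤ := hSf.toFinset.sup Finsupp.support with hT
  obtain ⟨n, hn⟩ := Infinite.exists_notMem_finset T
  have key : AddSubgroup.closure S ≤ (Finsupp.applyAddHom (M := ℤ) n).ker := by
    apply AddSubgroup.closure_le _ |>.mpr
    intro s hs
    have hsup : s.support ≤ T := Finset.le_sup (f := Finsupp.support) (hSf.mem_toFinset.mpr hs)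
    have hns : n ∉ s.support := fun hmem => hn (hsup hmem)
    simpa [AddMonoidHom.mem_ker, Finsupp.applyAddHom] using Finsupp.notMem_support_iff.mp hns
  have hmem : (Finsupp.single n (1:ℤ)) ∈ AddSubgroup.closure S := by
    rw [hSc]; trivial
  have h2 := key hmem
  rw [AddMonoidHom.mem_ker] at h2
  simp [Finsupp.applyAddHom] at h2

end WreathAux


namespace WreathAux

open Multiplicative SemidirectProduct

variable (act : C₂ →* MulAut (F₂ × F₂))

lemma c2_cases : ∀ c : C₂, c = 1 ∨ c = ofAdd 1 := by decide

/-- The swapping element of the wreath product. -/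
def σH : (F₂ × F₂) ⋊[act] C₂ := ⟨1, ofAdd 1⟩

/-- Sum-of-exponent-sums homomorphism on `F₂ × F₂`. -/
noncomputable def χ₁ : F₂ × F₂ →* Multiplicative ℤ :=
  (ea.comp (MonoidHom.fst F₂ F₂)) * (ea.comp (MonoidHom.snd F₂ F₂))

lemma χ₁_apply (v : F₂ × F₂) : χ₁ v = ea v.1 * ea v.2 := rfl

variable (hact : ∀ x : F₂ × F₂, act (Multiplicative.ofAdd 1) x = (x.2, x.1))

include hact

lemma act_eq (c : C₂) (v : F₂ × F₂) : (act c) v = v ∨ (act c) v = (v.2, v.1) := by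
  rcases c2_cases c with rfl | rfl
  · left; simp
  · right; exact hact v

lemma act_fst (c : C₂) (v : F₂ × F₂) (hv : v.1 = v.2) : ((act c) v).1 = v.1 := by
  rcases act_eq act hact c v with h | h <;> rw [h]
  exact hv.symm

/-- The character `χ` on the wreath product. -/
noncomputable def χ : ((F₂ × F₂) ⋊[act] C₂) →* Multiplicative ℤ :=
  SemidirectProduct.lift χ₁ 1 (by
    intro g
    ext v
    simp only [MonoidHom.comp_apply, MulEquiv.coe_toMonoidHom, MonoidHom.one_apply, map_one,
      MulAut.conj_apply, one_mul, inv_one, mul_one]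
    rcases act_eq act hact g v with h | h <;>
      simp [h, χ₁_apply, mul_comm])

lemma χ_apply (x : (F₂ × F₂) ⋊[act] C₂) : χ act hact x = ea x.left.1 * ea x.left.2 := by
  show χ₁ x.left * (1 : C₂ →* Multiplicative ℤ) x.right = _
  rw [χ₁_apply]
  simp

/-- The automorphism `φ` of `H × ℤ`. -/
noncomputable def φA : (((F₂ × F₂) ⋊[act] C₂) × Multiplicative ℤ) ≃*
    (((F₂ × F₂) ⋊[act] C₂) × Multiplicative ℤ) where
  toFun x := (MulAut.conj (σH act) x.1, x.2 * χ act hact x.1)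
  invFun x := ((MulAut.conj (σH act))⁻¹ x.1,
    x.2 * (χ act hact ((MulAut.conj (σH act))⁻¹ x.1))⁻¹)
  left_inv x := by
    obtain ⟨h, z⟩ := x
    simp [MulAut.inv_def, mul_assoc]
  right_inv x := by
    obtain ⟨h, z⟩ := x
    simp [MulAut.inv_def, mul_assoc]
  map_mul' x y := by
    obtain ⟨h, z⟩ := x
    obtain ⟨h', z'⟩ := y
    refine Prod.ext ?_ ?_ <;> simp only [Prod.mk_mul_mk, map_mul]
    exact mul_mul_mul_comm z z' _ _

lemma mem_fix_iff (x : ((F₂ × F₂) ⋊[act] C₂) × Multiplicative ℤ) :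
    x ∈ fixedSubgroup (φA act hact) ↔
      MulAut.conj (σH act) x.1 = x.1 ∧ χ act hact x.1 = 1 := by
  have h1 : x ∈ fixedSubgroup (φA act hact) ↔ φA act hact x = x := Iff.rfl
  rw [h1]
  show (MulAut.conj (σH act) x.1, x.2 * χ act hact x.1) = (x.1, x.2) ↔ _
  rw [Prod.mk.injEq, mul_eq_left]

lemma fix_diag (x : ((F₂ × F₂) ⋊[act] C₂) × Multiplicative ℤ)
    (hx : x ∈ fixedSubgroup (φA act hact)) : x.1.left.1 = x.1.left.2 := by
  obtain ⟨hc, -⟩ := (mem_fix_iff act hact x).mp hx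
  rw [MulAut.conj_apply, mul_inv_eq_iff_eq_mul] at hc
  have hl := congrArg SemidirectProduct.left hc
  have hL : ((σH act) * x.1).left = (x.1.left.2, x.1.left.1) := by
    show (σH act).left * (act (σH act).right) x.1.left = _
    show (1 : F₂ × F₂) * (act (ofAdd 1)) x.1.left = _
    rw [one_mul, hact]
  have hR : (x.1 * (σH act)).left = x.1.left := by
    show x.1.left * (act x.1.right) (σH act).left = _
    show x.1.left * (act x.1.right) (1 : F₂ × F₂) = _
    rw [map_one, mul_one]
  rw [hL, hR] at hl
  exact (congrArg Prod.snd hl).symm ▸ (congrArg Prod.fst hl) ▸ rfl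

lemma fix_ea (x : ((F₂ × F₂) ⋊[act] C₂) × Multiplicative ℤ)
    (hx : x ∈ fixedSubgroup (φA act hact)) : ea x.1.left.1 = 1 := by
  obtain ⟨-, hχ⟩ := (mem_fix_iff act hact x).mp hx
  rw [χ_apply, ← fix_diag act hact x hx] at hχ
  have h2 := congrArg Multiplicative.toAdd hχ
  rw [toAdd_mul, toAdd_one] at h2
  have : (ea x.1.left.1).toAdd = 0 := by omega
  calc ea x.1.left.1 = ofAdd (ea x.1.left.1).toAdd := rfl
    _ = ofAdd 0 := by rw [this]
    _ = 1 := rfl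

lemma diag_mem (f : F₂) (hf : ea f = 1) :
    (((⟨(f, f), 1⟩ : (F₂ × F₂) ⋊[act] C₂), 1) :
        ((F₂ × F₂) ⋊[act] C₂) × Multiplicative ℤ) ∈ fixedSubgroup (φA act hact) := by
  have hcomm : σH act * (⟨(f, f), 1⟩ : (F₂ × F₂) ⋊[act] C₂) =
      (⟨(f, f), 1⟩ : (F₂ × F₂) ⋊[act] C₂) * σH act := by
    refine SemidirectProduct.ext ?_ ?_
    · rw [mul_left, mul_left]
      show (1 : F₂ × F₂) * (act (ofAdd 1)) (f, f) = (f, f) * (act (1 : C₂)) (1 : F₂ × F₂)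
      rw [one_mul, hact, map_one, mul_one]
    · rw [mul_right, mul_right]
      show ofAdd 1 * (1 : C₂) = (1 : C₂) * ofAdd 1
      rw [mul_one, one_mul]
  rw [mem_fix_iff]
  constructor
  · rw [MulAut.conj_apply, mul_inv_eq_iff_eq_mul]
    exact hcomm
  · rw [χ_apply]
    show ea f * ea f = 1
    rw [hf, mul_one]

/-- The key homomorphism from the fixed subgroup to `⊕_{ℤ} ℤ`. -/
noncomputable def Ψ : ↥(fixedSubgroup (φA act hact)) →* Multiplicative (ℤ →₀ ℤ) where
  toFun x := (θ x.val.1.left.1).left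
  map_one' := by
    show (θ ((1 : (F₂ × F₂) ⋊[act] C₂).left).1).left = 1
    rw [one_left]
    show (θ (1 : F₂)).left = 1
    rw [map_one, one_left]
  map_mul' x y := by
    have hy : y.val.1.left.1 = y.val.1.left.2 := fix_diag act hact y.val y.2
    have hx1 : ea x.val.1.left.1 = 1 := fix_ea act hact x.val x.2
    have hmul : (↑(x * y) : ((F₂ × F₂) ⋊[act] C₂) × Multiplicative ℤ).1.left.1 =
        x.val.1.left.1 * y.val.1.left.1 := by
      show ((x.val.1 * y.val.1).left).1 = _
      show (x.val.1.left * (act x.val.1.right) y.val.1.left).1 = _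
      show x.val.1.left.1 * ((act x.val.1.right) y.val.1.left).1 = _
      rw [act_fst act hact _ _ hy]
    show (θ _).left = (θ _).left * (θ _).left
    rw [hmul, map_mul, mul_left]
    have hr : (θ x.val.1.left.1).right = 1 := by
      have := rightHom_θ x.val.1.left.1
      rw [rightHom_eq_right] at this
      rw [this, hx1]
    rw [hr, map_one]
    rfl

lemma Ψ_surjective : Function.Surjective (Ψ act hact) := by
  have hsingle : ∀ n : ℤ, ofAdd (Finsupp.single n (1 : ℤ)) ∈ (Ψ act hact).range := by
    intro n
    set w : F₂ := FreeGroup.of (0 : Fin 2) ^ n * FreeGroup.of (1 : Fin 2) *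
      FreeGroup.of (0 : Fin 2) ^ (-n) with hw
    have hew : ea w = 1 := by
      have e0 : ea (FreeGroup.of (0 : Fin 2)) = ofAdd 1 := by simp [ea]
      have e1 : ea (FreeGroup.of (1 : Fin 2)) = 1 := by simp [ea]
      rw [hw, map_mul, map_mul, map_zpow, map_zpow, e0, e1, mul_one, ← zpow_add]
      simp
    refine ⟨⟨((⟨(w, w), 1⟩ : (F₂ × F₂) ⋊[act] C₂), 1), diag_mem act hact w hew⟩, ?_⟩
    show (θ w).left = _
    rw [hw, theta_conj, left_inl]
  have key : ∀ f : ℤ →₀ ℤ, ofAdd f ∈ (Ψ act hact).range := by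
    intro f
    induction f using Finsupp.induction with
    | zero =>
      have : ofAdd (0 : ℤ →₀ ℤ) = 1 := rfl
      rw [this]; exact one_mem _
    | single_add a b f ha0 hb0 ih =>
      have h1 : ofAdd (Finsupp.single a b + f) = ofAdd (Finsupp.single a b) * ofAdd f := rfl
      rw [h1]
      refine mul_mem ?_ ih
      have h2 : ofAdd (Finsupp.single a b) = (ofAdd (Finsupp.single a (1 : ℤ))) ^ b := by
        rw [← ofAdd_zsmul, Finsupp.smul_single, smul_eq_mul, mul_one]
      rw [h2]
      exact zpow_mem (hsingle a) b
  intro v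
  obtain ⟨x, hx⟩ := key v.toAdd
  exact ⟨x, by simpa using hx⟩

end WreathAux


/-- For the wreath product `H = (F₂ × F₂) ⋊ C₂`, the group `H × ℤ`
does not have FGFPa: some automorphism of `H × ℤ` has a fixed subgroup which is not
finitely generated. -/
theorem wreath_times_int_not_FGFPa (act : C₂ →* MulAut (F₂ × F₂))
    (hact : ∀ x : F₂ × F₂, act (Multiplicative.ofAdd 1) x = (x.2, x.1)) :
    ∃ φ : (((F₂ × F₂) ⋊[act] C₂) × Multiplicative ℤ) ≃*
        (((F₂ × F₂) ⋊[act] C₂) × Multiplicative ℤ),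
      ¬ Group.FG ↥(fixedSubgroup φ) := by
  refine ⟨WreathAux.φA act hact, fun hFG => ?_⟩
  haveI := hFG
  have h2 : Group.FG (Multiplicative (ℤ →₀ ℤ)) :=
    Group.fg_of_surjective (WreathAux.Ψ_surjective act hact)
  exact WreathAux.A_not_fg (AddGroup.fg_iff_mul_fg.mpr h2)
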